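/- Let $c = 1 - 1/\sqrt{3}$ and let $n, K > 0$ with $\delta_0 = 2\sqrt{K/n} \leq 1/(2c)$. Then $\int_{\delta_0}^{1/c} \frac{1}{1 - \exp(-2c^2 u^2)}\, du \leq \frac{2}{3c^2 \delta_0} - \frac{4}{3c} + \frac{1}{2c(1-\exp(-1/2))}$. -/

import Mathlib

open intervalIntegral

-- exp(-1/2) ≤ 5/8
lemma exp_half_le : Real.exp (-(1/2 : ℝ)) ≤ 5/8 := by
  have h1 : (2.7182818283 : ℝ) < Real.exp 1 := Real.exp_one_gt_d9
  have h2 : Real.exp (-(1/2 : ℝ)) * Real.exp (-(1/2 : ℝ)) = Real.exp (-1) := by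
    rw [← Real.exp_add]; norm_num
  have h3 : Real.exp (-1 : ℝ) * Real.exp 1 = 1 := by rw [← Real.exp_add]; norm_num
  nlinarith [Real.exp_pos (-(1/2 : ℝ)), Real.exp_pos (-1 : ℝ)]

-- convexity bound: for 0 ≤ t ≤ 1/2, (3/4) t ≤ 1 - exp(-t)
lemma key_bound (t : ℝ) (h0 : 0 ≤ t) (h1 : t ≤ 1/2) :
    (3/4 : ℝ) * t ≤ 1 - Real.exp (-t) := by
  have hconv := convexOn_exp.2 (Set.mem_univ (-(1/2 : ℝ))) (Set.mem_univ (0 : ℝ))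
    (by linarith : (0:ℝ) ≤ 2 * t) (by linarith : (0:ℝ) ≤ 1 - 2 * t) (by ring)
  simp only [smul_eq_mul, mul_zero, add_zero, Real.exp_zero, mul_one] at hconv
  have : (2 * t) * (-(1/2 : ℝ)) = -t := by ring
  rw [this] at hconv
  have h58 := exp_half_le
  nlinarith [Real.exp_pos (-(1/2 : ℝ))]

theorem stmt_3 (n K : ℝ) (hK : 0 < K) (hn : 0 < n)
    (c : ℝ) (hc : c = 1 - 1 / Real.sqrt 3)
    (δ₀ : ℝ) (hδ₀ : δ₀ = 2 * Real.sqrt (K / n)) (hδ₀le : δ₀ ≤ 1 / (2 * c)) :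
    ∫ u in δ₀..(1 / c), 1 / (1 - Real.exp (-2 * c ^ 2 * u ^ 2))
      ≤ 2 / (3 * c ^ 2 * δ₀) - 4 / (3 * c) + 1 / (2 * c * (1 - Real.exp (-1 / 2))) := by
  have hs3 : (1:ℝ) < Real.sqrt 3 := by
    rw [show (1:ℝ) = Real.sqrt 1 by simp]
    exact Real.sqrt_lt_sqrt (by norm_num) (by norm_num)
  have hc0 : 0 < c := by
    have : 1 / Real.sqrt 3 < 1 := by
      rw [div_lt_one (by linarith)]; exact hs3
    rw [hc]; linarith
  have hδpos : 0 < δ₀ := by rw [hδ₀]; positivity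
  set f : ℝ → ℝ := fun u => 1 / (1 - Real.exp (-2 * c ^ 2 * u ^ 2)) with hf
  set m : ℝ := 1 / (2 * c) with hm
  set b : ℝ := 1 / c with hb
  have hmpos : 0 < m := by positivity
  have hmb : m ≤ b := by
    rw [hm, hb]
    apply one_div_le_one_div_of_le hc0 (by linarith)
  have hδb : δ₀ ≤ b := le_trans hδ₀le hmb
  -- denominator positivity on positive u
  have hden : ∀ u : ℝ, 0 < u → 0 < 1 - Real.exp (-2 * c ^ 2 * u ^ 2) := by
    intro u hu
    have : Real.exp (-2 * c ^ 2 * u ^ 2) < 1 := by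
      rw [Real.exp_lt_one_iff]
      have h := mul_pos (pow_pos hc0 2) (pow_pos hu 2)
      nlinarith
    linarith
  have hcont : ContinuousOn f (Set.Icc δ₀ b) := by
    apply ContinuousOn.div continuousOn_const (by fun_prop)
    intro u hu
    have hu0 : 0 < u := lt_of_lt_of_le hδpos hu.1
    exact ne_of_gt (hden u hu0)
  have hI1 : IntervalIntegrable f MeasureTheory.volume δ₀ m := by
    apply (hcont.mono _).intervalIntegrable
    rw [Set.uIcc_of_le hδ₀le]
    exact Set.Icc_subset_Icc le_rfl hmb
  have hI2 : IntervalIntegrable f MeasureTheory.volume m b := by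
    apply (hcont.mono _).intervalIntegrable
    rw [Set.uIcc_of_le hmb]
    exact Set.Icc_subset_Icc hδ₀le le_rfl
  have hsplit : (∫ u in δ₀..b, f u) = (∫ u in δ₀..m, f u) + ∫ u in m..b, f u :=
    (integral_add_adjacent_intervals hI1 hI2).symm
  -- first piece
  set g : ℝ → ℝ := fun u => 2 / (3 * c ^ 2) * (u ^ 2)⁻¹ with hg
  have hgcont : ContinuousOn g (Set.Icc δ₀ m) := by
    apply ContinuousOn.mul continuousOn_const
    apply ContinuousOn.inv₀ (by fun_prop)
    intro u hu
    have hu0 : 0 < u := lt_of_lt_of_le hδpos hu.1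
    positivity
  have hgI : IntervalIntegrable g MeasureTheory.volume δ₀ m := by
    apply hgcont.intervalIntegrable_of_Icc hδ₀le
  have hfg : ∀ u ∈ Set.Icc δ₀ m, f u ≤ g u := by
    intro u hu
    have hu0 : 0 < u := lt_of_lt_of_le hδpos hu.1
    have hum : u ≤ m := hu.2
    have hx1 : 2 * c ^ 2 * u ^ 2 ≤ 1 / 2 := by
      have : u * (2 * c) ≤ 1 := by
        have := mul_le_mul_of_nonneg_right hum (by positivity : (0:ℝ) ≤ 2 * c)
        rwa [hm, one_div, inv_mul_cancel₀ (by positivity)] at this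
      have h2 := mul_le_mul this this (by positivity) zero_le_one
      nlinarith
    have hkey := key_bound (2 * c ^ 2 * u ^ 2) (by positivity) hx1
    have heq : -(2 * c ^ 2 * u ^ 2) = -2 * c ^ 2 * u ^ 2 := by ring
    rw [heq] at hkey
    have hlow : (3/2 : ℝ) * c ^ 2 * u ^ 2 ≤ 1 - Real.exp (-2 * c ^ 2 * u ^ 2) := by
      nlinarith
    have hlp : (0:ℝ) < (3/2) * c ^ 2 * u ^ 2 := by positivity
    have := one_div_le_one_div_of_le hlp hlow
    calc f u ≤ 1 / ((3/2 : ℝ) * c ^ 2 * u ^ 2) := this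
      _ = g u := by rw [hg]; field_simp
  have hmono1 : (∫ u in δ₀..m, f u) ≤ ∫ u in δ₀..m, g u :=
    integral_mono_on hδ₀le hI1 hgI hfg
  have hgval : (∫ u in δ₀..m, g u) = 2 / (3 * c ^ 2) * (δ₀⁻¹ - m⁻¹) := by
    rw [hg, intervalIntegral.integral_const_mul]
    congr 1
    have : (∫ u in δ₀..m, (u ^ 2)⁻¹) = (-(m⁻¹)) - (-(δ₀⁻¹)) := by
      apply intervalIntegral.integral_eq_sub_of_hasDerivAt (f := fun u : ℝ => -(u⁻¹))
      · intro u hu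
        rw [Set.uIcc_of_le hδ₀le] at hu
        have hu0 : u ≠ 0 := ne_of_gt (lt_of_lt_of_le hδpos hu.1)
        have := (hasDerivAt_inv hu0).neg
        exact this.congr_deriv (by ring)
      · apply ContinuousOn.intervalIntegrable
        apply ContinuousOn.inv₀ (by fun_prop)
        intro u hu
        rw [Set.uIcc_of_le hδ₀le] at hu
        have hu0 : 0 < u := lt_of_lt_of_le hδpos hu.1
        positivity
    rw [this]; ring
  -- second piece
  have hC : (0:ℝ) < 1 - Real.exp (-1/2 : ℝ) := by
    have : Real.exp (-1/2 : ℝ) < 1 := by rw [Real.exp_lt_one_iff]; norm_num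
    linarith
  have hfC : ∀ u ∈ Set.Icc m b, f u ≤ 1 / (1 - Real.exp (-1/2 : ℝ)) := by
    intro u hu
    have hu0 : 0 < u := lt_of_lt_of_le hmpos hu.1
    have hum : m ≤ u := hu.1
    have hx : (1/2 : ℝ) ≤ 2 * c ^ 2 * u ^ 2 := by
      have : 1 ≤ u * (2 * c) := by
        have := mul_le_mul_of_nonneg_right hum (by positivity : (0:ℝ) ≤ 2 * c)
        rwa [hm, one_div, inv_mul_cancel₀ (by positivity)] at this
      have h2 := mul_le_mul this this zero_le_one (by positivity)
      nlinarith
    have hexp : Real.exp (-2 * c ^ 2 * u ^ 2) ≤ Real.exp (-1/2 : ℝ) :=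
      Real.exp_le_exp.2 (by linarith)
    apply one_div_le_one_div_of_le hC (by linarith)
  have hmono2 : (∫ u in m..b, f u) ≤ ∫ u in m..b, (1 / (1 - Real.exp (-1/2 : ℝ))) :=
    integral_mono_on hmb hI2 intervalIntegrable_const hfC
  have hcval : (∫ u in m..b, (1 / (1 - Real.exp (-1/2 : ℝ)))) 
      = (b - m) * (1 / (1 - Real.exp (-1/2 : ℝ))) := by
    rw [intervalIntegral.integral_const, smul_eq_mul]
  -- combine
  have hminv : m⁻¹ = 2 * c := by rw [hm]; field_simp
  have hbm : b - m = 1 / (2 * c) := by rw [hb, hm]; field_simp; ring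
  have e1 : 2 / (3 * c ^ 2) * (δ₀⁻¹ - m⁻¹) = 2 / (3 * c ^ 2 * δ₀) - 4 / (3 * c) := by
    rw [hminv]; field_simp; ring
  have e2 : (b - m) * (1 / (1 - Real.exp (-1/2 : ℝ))) 
      = 1 / (2 * c * (1 - Real.exp (-1 / 2))) := by
    rw [hbm, div_mul_div_comm, one_mul]
  have hgoal : intervalIntegral f δ₀ b MeasureTheory.volume
      = (∫ u in δ₀..m, f u) + ∫ u in m..b, f u := hsplit
  rw [hgoal]
  rw [hgval] at hmono1
  rw [hcval] at hmono2
  linarith [hmono1, hmono2, e1.le, e2.le]
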